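/- Consider a two-node Ising model on variables X₁, X₂ ∈ {-1,+1} with joint distribution P(x₁, x₂) ∝ exp(J·x₁x₂ + h₂·x₂) for real parameters J and h₂. Marginalizing over X₂ yields a distribution on X₁ proportional to exp(h₁'·x₁), where h₁' = (1/2)·log[(e^{J+h₂} + e^{-J-h₂})/(e^{-J+h₂} + e^{J-h₂})], and this induced field satisfies |h₁'| ≤ |h₂|·tanh(|J|). -/

import Mathlib

open Real

private lemma tanh_add_tanh (u v : ℝ) :
    Real.tanh u + Real.tanh v = Real.sinh (u + v) / (Real.cosh u * Real.cosh v) := by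
  rw [Real.tanh_eq_sinh_div_cosh, Real.tanh_eq_sinh_div_cosh, Real.sinh_add]
  field_simp [(Real.cosh_pos u).ne', (Real.cosh_pos v).ne']

private lemma cosh_mul_cosh_ge (a x : ℝ) :
    Real.cosh a ^ 2 ≤ Real.cosh (a + x) * Real.cosh (a - x) := by
  rw [Real.cosh_add, Real.cosh_sub]
  nlinarith [Real.cosh_sq a, Real.cosh_sq x, sq_nonneg (Real.sinh x), sq_nonneg (Real.sinh a)]

private lemma tanh_sum_le (a x : ℝ) (ha : 0 ≤ a) :
    Real.tanh (a + x) + Real.tanh (a - x) ≤ 2 * Real.tanh a := by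
  have h1 : Real.tanh (a + x) + Real.tanh (a - x)
      = Real.sinh (2 * a) / (Real.cosh (a + x) * Real.cosh (a - x)) := by
    rw [tanh_add_tanh]; ring_nf
  have h2 : 2 * Real.tanh a = Real.sinh (2 * a) / (Real.cosh a * Real.cosh a) := by
    have := tanh_add_tanh a a
    rw [show a + a = 2 * a by ring] at this
    linarith
  rw [h1, h2]
  have hs : 0 ≤ Real.sinh (2 * a) := Real.sinh_nonneg_iff.mpr (by linarith)
  have hcc : Real.cosh a * Real.cosh a ≤ Real.cosh (a + x) * Real.cosh (a - x) := by
    have := cosh_mul_cosh_ge a x; nlinarith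
  exact div_le_div_of_nonneg_left hs (by positivity) hcc

private lemma key_ineq (a b : ℝ) (ha : 0 ≤ a) (hb : 0 ≤ b) :
    Real.log (Real.cosh (a + b)) - Real.log (Real.cosh (a - b)) ≤ 2 * b * Real.tanh a := by
  set g : ℝ → ℝ := fun x =>
    2 * x * Real.tanh a - Real.log (Real.cosh (a + x)) + Real.log (Real.cosh (a - x)) with hg
  have hd : ∀ x : ℝ, HasDerivAt g
      (2 * Real.tanh a - (Real.tanh (a + x) + Real.tanh (a - x))) x := by
    intro x
    have h1 : HasDerivAt (fun x : ℝ => 2 * x * Real.tanh a) (2 * Real.tanh a) x := by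
      simpa using ((hasDerivAt_id x).const_mul 2).mul_const (Real.tanh a)
    have hc1 : HasDerivAt (fun x : ℝ => Real.cosh (a + x)) (Real.sinh (a + x)) x := by
      simpa [Function.comp_def] using (Real.hasDerivAt_cosh (a + x)).comp x ((hasDerivAt_id x).const_add a)
    have hc2 : HasDerivAt (fun x : ℝ => Real.cosh (a - x)) (-Real.sinh (a - x)) x := by
      have := (Real.hasDerivAt_cosh (a - x)).comp x ((hasDerivAt_id x).neg.const_add a)
      simpa [mul_comm, Function.comp_def] using this
    have h2 : HasDerivAt (fun x : ℝ => Real.log (Real.cosh (a + x))) (Real.tanh (a + x)) x := by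
      have := hc1.log (Real.cosh_pos (a + x)).ne'
      simpa [Real.tanh_eq_sinh_div_cosh] using this
    have h3 : HasDerivAt (fun x : ℝ => Real.log (Real.cosh (a - x))) (-Real.tanh (a - x)) x := by
      have := hc2.log (Real.cosh_pos (a - x)).ne'
      rw [Real.tanh_eq_sinh_div_cosh]
      simpa [neg_div] using this
    have := (h1.sub h2).add h3
    convert this using 1
    all_goals first | rfl | ring
  have hmono : Monotone g :=
    monotone_of_deriv_nonneg (fun x => (hd x).differentiableAt)
      (fun x => by rw [(hd x).deriv]; linarith [tanh_sum_le a x ha])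
  have h0 : g 0 = 0 := by simp [hg]
  have hb' : g 0 ≤ g b := hmono hb
  rw [h0] at hb'
  simp only [hg] at hb'
  linarith

private lemma abs_bound (a b : ℝ) (ha : 0 ≤ a) (hb : 0 ≤ b) :
    |(1 / 2) * (Real.log (Real.cosh (a + b)) - Real.log (Real.cosh (a - b)))|
      ≤ b * Real.tanh a := by
  have hle : Real.cosh (a - b) ≤ Real.cosh (a + b) := by
    rw [Real.cosh_le_cosh]
    rw [abs_of_nonneg (by linarith : (0:ℝ) ≤ a + b)]
    rw [abs_sub_le_iff]; constructor <;> linarith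
  have hnn : 0 ≤ (1 / 2) * (Real.log (Real.cosh (a + b)) - Real.log (Real.cosh (a - b))) := by
    have := Real.log_le_log (Real.cosh_pos _) hle
    linarith
  rw [abs_of_nonneg hnn]
  have := key_ineq a b ha hb
  linarith

/-- Two-node Ising model: marginalizing the leaf `X₂` induces an external field `h₁'`
on node 1, with an explicit formula and the bound `|h₁'| ≤ |h₂| · tanh |J|`. -/
theorem stmt_3 (J h₂ : ℝ) :
    let h₁' : ℝ := (1 / 2) * Real.log ((Real.exp (J + h₂) + Real.exp (-J - h₂)) /
        (Real.exp (-J + h₂) + Real.exp (J - h₂)))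
    (∃ c : ℝ, 0 < c ∧ ∀ x₁ : ℝ, x₁ = 1 ∨ x₁ = -1 →
        Real.exp (J * x₁ * 1 + h₂ * 1) + Real.exp (J * x₁ * (-1) + h₂ * (-1))
          = c * Real.exp (h₁' * x₁)) ∧
    |h₁'| ≤ |h₂| * Real.tanh |J| := by
  intro h₁'
  set A : ℝ := Real.exp (J + h₂) + Real.exp (-J - h₂) with hA
  set B : ℝ := Real.exp (-J + h₂) + Real.exp (J - h₂) with hB
  have hApos : 0 < A := by positivity
  have hBpos : 0 < B := by positivity
  have hA2 : A = 2 * Real.cosh (J + h₂) := by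
    rw [Real.cosh_eq, show -(J + h₂) = -J - h₂ by ring]; ring
  have hB2 : B = 2 * Real.cosh (J - h₂) := by
    rw [Real.cosh_eq, show -(J - h₂) = -J + h₂ by ring]; ring
  have hexp : Real.exp h₁' = Real.sqrt (A / B) := by
    show Real.exp ((1 / 2) * Real.log (A / B)) = _
    rw [show (1 / 2 : ℝ) * Real.log (A / B) = Real.log (A / B) / 2 by ring,
      ← Real.log_sqrt (by positivity), Real.exp_log (Real.sqrt_pos.mpr (by positivity))]
  constructor
  · refine ⟨Real.sqrt (A * B), Real.sqrt_pos.mpr (by positivity), ?_⟩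
    rintro x₁ (rfl | rfl)
    · rw [show J * 1 * 1 + h₂ * 1 = J + h₂ by ring, show J * 1 * (-1) + h₂ * (-1) = -J - h₂ by ring,
        mul_one, hexp, ← Real.sqrt_mul (by positivity),
        show A * B * (A / B) = A ^ 2 by field_simp, Real.sqrt_sq hApos.le]
    · rw [show J * (-1) * 1 + h₂ * 1 = -J + h₂ by ring,
        show J * (-1) * (-1) + h₂ * (-1) = J - h₂ by ring,
        mul_neg_one, Real.exp_neg, hexp]
      rw [← Real.sqrt_inv, ← Real.sqrt_mul (by positivity),
        show A * B * (A / B)⁻¹ = B ^ 2 by field_simp, Real.sqrt_sq hBpos.le]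
  · have hform : h₁' = (1 / 2) * (Real.log (Real.cosh (J + h₂)) - Real.log (Real.cosh (J - h₂))) := by
      show (1 / 2) * Real.log (A / B) = _
      rw [Real.log_div hApos.ne' hBpos.ne', hA2, hB2,
        Real.log_mul two_ne_zero (Real.cosh_pos _).ne',
        Real.log_mul two_ne_zero (Real.cosh_pos _).ne']
      ring
    set a : ℝ := |J| with ha
    set b : ℝ := |h₂| with hbb
    have ha0 : 0 ≤ a := abs_nonneg _
    have hb0 : 0 ≤ b := abs_nonneg _
    have hmain := abs_bound a b ha0 hb0
    have hcosh : ∀ x y : ℝ, x ^ 2 = y ^ 2 → Real.cosh x = Real.cosh y := by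
      intro x y h
      have habs : |x| = |y| := by
        rw [← Real.sqrt_sq_eq_abs, ← Real.sqrt_sq_eq_abs, h]
      rw [← Real.cosh_abs x, ← Real.cosh_abs y, habs]
    have hcases : (Real.cosh (J + h₂) = Real.cosh (a + b) ∧ Real.cosh (J - h₂) = Real.cosh (a - b))
        ∨ (Real.cosh (J + h₂) = Real.cosh (a - b) ∧ Real.cosh (J - h₂) = Real.cosh (a + b)) := by
      rcases le_or_gt 0 J with hJ | hJ <;> rcases le_or_gt 0 h₂ with hh | hh <;>
        [left; right; right; left] <;>
        rw [ha, hbb] <;>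
        [rw [abs_of_nonneg hJ, abs_of_nonneg hh]; rw [abs_of_nonneg hJ, abs_of_neg hh];
         rw [abs_of_neg hJ, abs_of_nonneg hh]; rw [abs_of_neg hJ, abs_of_neg hh]] <;>
        exact ⟨by apply hcosh; ring, by apply hcosh; ring⟩
    rcases hcases with ⟨h1, h2⟩ | ⟨h1, h2⟩
    · rw [hform, h1, h2]
      exact hmain
    · rw [hform, h1, h2,
        show (1/2 : ℝ) * (Real.log (Real.cosh (a - b)) - Real.log (Real.cosh (a + b)))
          = -((1/2) * (Real.log (Real.cosh (a + b)) - Real.log (Real.cosh (a - b)))) by ring,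
        abs_neg]
      exact hmain
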